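/- Let A = (a_{ij}) ∈ M_n(ℝ₊) be a nonnegative n×n matrix. Then the max numerical range of A is the closed interval W_max(A) = [a, b] ⊆ ℝ₊, where a = min_{1≤i≤n} a_{ii} and b = max_{1≤i,j≤n} a_{ij} = ‖A‖. -/

import Mathlib

open Matrix Finset

section helpers
variable {n : ℕ}

lemma bdd_range (f : Fin n → ℝ) : BddAbove (Set.range f) :=
  (Set.finite_range f).bddAbove

lemma ciSup_eq_sup' [Nonempty (Fin n)] (f : Fin n → ℝ) :
    (⨆ i, f i) = univ.sup' univ_nonempty f :=
  (Finset.sup'_univ_eq_ciSup f).symm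

lemma term_le {u v c : ℝ} (hu0 : 0 ≤ u) (hu1 : u ≤ 1) (hv0 : 0 ≤ v) (hv1 : v ≤ 1)
    (hc : 0 ≤ c) : u * v * c ≤ c := by
  calc u * v * c ≤ 1 * c := mul_le_mul_of_nonneg_right (mul_le_one₀ hu1 hv0 hv1) hc
  _ = c := one_mul c

end helpers

/-- For a nonnegative `n × n` matrix `A` (`n ≥ 1`), the max numerical
range `W_max(A) = { max_{i,j} x_i x_j a_{ij} : x ≥ 0, max_i x_i² = 1 }` equals the closed
interval `[min_i a_{ii}, max_{i,j} a_{ij}]`. -/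
theorem stmt_0 {n : ℕ} (hn : 0 < n) (A : Matrix (Fin n) (Fin n) ℝ)
    (hA : ∀ i j, 0 ≤ A i j) :
    {z : ℝ | ∃ x : Fin n → ℝ, (∀ i, 0 ≤ x i) ∧ (⨆ i, x i * x i) = 1 ∧
        z = ⨆ i, ⨆ j, x i * x j * A i j} =
      Set.Icc (⨅ i, A i i) (⨆ i, ⨆ j, A i j) := by
  have hne : Nonempty (Fin n) := Fin.pos_iff_nonempty.mp hn
  set a := ⨅ i, A i i with ha
  set b := ⨆ i, ⨆ j, A i j with hb
  -- attainment of min and max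
  obtain ⟨i0, hi0⟩ := Finite.exists_min (fun i => A i i)
  have haeq : a = A i0 i0 := le_antisymm (ciInf_le (Set.finite_range _).bddBelow i0)
    (le_ciInf hi0)
  obtain ⟨p, hp⟩ := Finite.exists_max (fun i => ⨆ j, A i j)
  obtain ⟨q, hq⟩ := Finite.exists_max (fun j => A p j)
  have hrow : ∀ i, (⨆ j, A i j) ≤ ⨆ j, A p j := hp
  have hbeq : b = A p q := by
    apply le_antisymm
    · exact ciSup_le fun i => le_trans (hp i) (ciSup_le hq)
    · exact le_trans (le_ciSup (bdd_range (A p)) q)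
        (le_ciSup (bdd_range fun i => ⨆ j, A i j) p)
  have hab : a ≤ b := by
    rw [haeq, hbeq]
    calc A i0 i0 ≤ ⨆ j, A i0 j := le_ciSup (bdd_range _) i0
    _ ≤ ⨆ j, A p j := hp i0
    _ = A p q := by
      apply le_antisymm (ciSup_le hq) (le_ciSup (bdd_range _) q)
  have ha0 : 0 ≤ a := haeq ▸ hA i0 i0
  -- generic bound on values
  ext z
  simp only [Set.mem_setOf_eq, Set.mem_Icc]
  constructor
  · rintro ⟨x, hx0, hx1, rfl⟩
    have hxle : ∀ i, x i ≤ 1 := by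
      intro i
      have h1 : x i * x i ≤ 1 := hx1 ▸ le_ciSup (bdd_range fun i => x i * x i) i
      nlinarith [hx0 i]
    constructor
    · -- there is i with x i * x i = 1
      obtain ⟨i, hi⟩ := Finite.exists_max (fun i => x i * x i)
      have : x i * x i = 1 := le_antisymm (by nlinarith [hxle i, hx0 i])
        (hx1 ▸ ciSup_le hi)
      calc a ≤ A i i := by rw [haeq]; exact hi0 i
      _ = x i * x i * A i i := by rw [this, one_mul]
      _ ≤ ⨆ j, x i * x j * A i j := le_ciSup (bdd_range fun j => x i * x j * A i j) i
      _ ≤ ⨆ i, ⨆ j, x i * x j * A i j :=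
            le_ciSup (bdd_range fun i => ⨆ j, x i * x j * A i j) i
    · apply ciSup_le; intro i; apply ciSup_le; intro j
      calc x i * x j * A i j ≤ A i j :=
            term_le (hx0 i) (hxle i) (hx0 j) (hxle j) (hA i j)
      _ ≤ ⨆ j, A i j := le_ciSup (bdd_range _) j
      _ ≤ b := le_ciSup (bdd_range fun i => ⨆ j, A i j) i
  · rintro ⟨hza, hzb⟩
    -- construction via IVT
    set x : ℝ → Fin n → ℝ := fun t i => if i = i0 then 1 else if i = p ∨ i = q then t else 0
      with hxdef
    set g : ℝ → ℝ := fun t => ⨆ i, ⨆ j, x t i * x t j * A i j with hg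
    have hgcont : ContinuousOn g (Set.Icc 0 1) := by
      apply Continuous.continuousOn
      have : g = fun t => univ.sup' univ_nonempty
          (fun i => univ.sup' univ_nonempty (fun j => x t i * x t j * A i j)) := by
        funext t
        rw [hg]
        simp only [ciSup_eq_sup']
      rw [this]
      apply Continuous.finset_sup'_apply univ_nonempty
      intro i _
      apply Continuous.finset_sup'_apply univ_nonempty
      intro j _
      have hc : ∀ k : Fin n, Continuous (fun t => x t k) := by
        intro k
        by_cases h1 : k = i0
        · simpa [hxdef, h1] using continuous_const
        · by_cases h2 : k = p ∨ k = q
          · simpa [hxdef, h1, h2] using continuous_id'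
          · simpa [hxdef, h1, h2] using continuous_const
      exact ((hc i).mul (hc j)).mul continuous_const
    have hg0 : g 0 = a := by
      rw [hg, haeq]
      apply le_antisymm
      · have hz : ∀ k, k ≠ i0 → x 0 k = 0 := by
          intro k hk; simp [hxdef, hk]
        apply ciSup_le; intro i; apply ciSup_le; intro j
        rcases eq_or_ne j i0 with hj | hj
        · rcases eq_or_ne i i0 with hi | hi
          · subst hi; subst hj; simp [hxdef]
          · rw [hz i hi]; simpa using hA i0 i0
        · rw [hz j hj]; simpa using hA i0 i0
      · have h1 : x 0 i0 * x 0 i0 * A i0 i0 = A i0 i0 := by simp [hxdef]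
        calc A i0 i0 = x 0 i0 * x 0 i0 * A i0 i0 := h1.symm
        _ ≤ ⨆ j, x 0 i0 * x 0 j * A i0 j := le_ciSup (bdd_range fun j => x 0 i0 * x 0 j * A i0 j) i0
        _ ≤ _ := le_ciSup (bdd_range fun i => ⨆ j, x 0 i * x 0 j * A i j) i0
    have hx1le : ∀ t ∈ Set.Icc (0:ℝ) 1, ∀ k, 0 ≤ x t k ∧ x t k ≤ 1 := by
      rintro t ⟨ht0, ht1⟩ k
      simp only [hxdef]
      split_ifs <;> constructor <;> linarith
    have hg1 : g 1 = b := by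
      rw [hg, hbeq]
      apply le_antisymm
      · apply ciSup_le; intro i; apply ciSup_le; intro j
        obtain ⟨h1a, h1b⟩ := hx1le 1 (by norm_num) i
        obtain ⟨h2a, h2b⟩ := hx1le 1 (by norm_num) j
        calc x 1 i * x 1 j * A i j ≤ A i j := term_le h1a h1b h2a h2b (hA i j)
        _ ≤ ⨆ j, A i j := le_ciSup (bdd_range _) j
        _ ≤ ⨆ j, A p j := hp i
        _ = A p q := le_antisymm (ciSup_le hq) (le_ciSup (bdd_range _) q)
      · have hp1 : x 1 p = 1 := by by_cases h : p = i0 <;> simp [hxdef, h]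
        have hq1 : x 1 q = 1 := by by_cases h : q = i0 <;> simp [hxdef, h]
        have h1 : x 1 p * x 1 q * A p q = A p q := by rw [hp1, hq1]; ring
        calc A p q = x 1 p * x 1 q * A p q := h1.symm
        _ ≤ ⨆ j, x 1 p * x 1 j * A p j := le_ciSup (bdd_range fun j => x 1 p * x 1 j * A p j) q
        _ ≤ _ := le_ciSup (bdd_range fun i => ⨆ j, x 1 i * x 1 j * A i j) p
    have hivt := intermediate_value_Icc (by norm_num : (0:ℝ) ≤ 1) hgcont
    rw [hg0, hg1] at hivt
    obtain ⟨t, ht, hgt⟩ := hivt ⟨hza, hzb⟩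
    refine ⟨x t, fun i => (hx1le t ht i).1, ?_, hgt.symm⟩
    apply le_antisymm
    · apply ciSup_le; intro i
      obtain ⟨h1, h2⟩ := hx1le t ht i
      nlinarith
    · have : x t i0 * x t i0 = 1 := by simp [hxdef]
      calc (1:ℝ) = x t i0 * x t i0 := this.symm
      _ ≤ ⨆ i, x t i * x t i := le_ciSup (bdd_range fun i => x t i * x t i) i0
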